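/- Let G be a unique product monoid, S a G-graded ring, M a graded right S-module, and N a prime S-submodule of M. Then ann(N) is a homogeneous prime ideal of S. -/

import Mathlib

open MulOpposite Finset DirectSum
open scoped DirectSum

namespace Stmt8Aux

section comps
variable {G : Type*} [DecidableEq G] {A : Type*} [AddCommGroup A]
variable (𝒜 : G → AddSubgroup A)

open scoped Classical

/-- The additive equivalence from the direct sum, for an internal decomposition. -/
noncomputable def dsE (h : DirectSum.IsInternal 𝒜) : (⨁ g, 𝒜 g) ≃+ A :=
  AddEquiv.ofBijective (DirectSum.coeAddMonoidHom 𝒜) h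

theorem dsE_apply (h : DirectSum.IsInternal 𝒜) (x : ⨁ g, 𝒜 g) :
    dsE 𝒜 h x = DirectSum.coeAddMonoidHom 𝒜 x := rfl

/-- The degree-`g` component. -/
noncomputable def gcomp (h : DirectSum.IsInternal 𝒜) (g : G) : A →+ A :=
  (𝒜 g).subtype.comp ((DFinsupp.evalAddMonoidHom g).comp (dsE 𝒜 h).symm.toAddMonoidHom)

theorem gcomp_apply (h : DirectSum.IsInternal 𝒜) (g : G) (a : A) :
    gcomp 𝒜 h g a = (((dsE 𝒜 h).symm a) g : A) := rfl

theorem gcomp_mem (h : DirectSum.IsInternal 𝒜) (g : G) (a : A) :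
    gcomp 𝒜 h g a ∈ 𝒜 g := (((dsE 𝒜 h).symm a) g).2

/-- The support. -/
noncomputable def gsupp (h : DirectSum.IsInternal 𝒜) (a : A) : Finset G :=
  ((dsE 𝒜 h).symm a).support

theorem mem_gsupp_iff (h : DirectSum.IsInternal 𝒜) (a : A) (g : G) :
    g ∈ gsupp 𝒜 h a ↔ gcomp 𝒜 h g a ≠ 0 := by
  rw [gsupp, DFinsupp.mem_support_iff, gcomp_apply, ne_eq, ne_eq,
    ZeroMemClass.coe_eq_zero]

theorem gsupp_eq_empty_iff (h : DirectSum.IsInternal 𝒜) (a : A) :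
    gsupp 𝒜 h a = ∅ ↔ a = 0 := by
  rw [gsupp, DFinsupp.support_eq_empty]
  constructor
  · intro hz
    have := congrArg (dsE 𝒜 h) hz
    simpa using this
  · rintro rfl
    simp

theorem sum_gsupp (h : DirectSum.IsInternal 𝒜) (a : A) :
    ∑ g ∈ gsupp 𝒜 h a, gcomp 𝒜 h g a = a := by
  have h1 := DirectSum.sum_support_of (β := fun g => 𝒜 g) ((dsE 𝒜 h).symm a)
  have h2 := congrArg (dsE 𝒜 h) h1
  rw [AddEquiv.apply_symm_apply, map_sum] at h2
  convert h2 using 2 with g hg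
  · rfl
  rw [dsE_apply, DirectSum.coeAddMonoidHom_of, gcomp_apply]

theorem gcomp_of (h : DirectSum.IsInternal 𝒜) {g g' : G} {w : A} (hw : w ∈ 𝒜 g') :
    gcomp 𝒜 h g w = if g' = g then w else 0 := by
  have he : (dsE 𝒜 h).symm w = DirectSum.of (fun g => 𝒜 g) g' ⟨w, hw⟩ := by
    rw [AddEquiv.symm_apply_eq, dsE_apply, DirectSum.coeAddMonoidHom_of]
  rw [gcomp_apply, he]
  by_cases hgg : g' = g
  · subst hgg
    rw [DirectSum.of_eq_same, if_pos rfl]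
  · rw [DirectSum.of_eq_of_ne _ _ _ (Ne.symm hgg), if_neg hgg, ZeroMemClass.coe_zero]

theorem gcomp_sum (h : DirectSum.IsInternal 𝒜) {T : Type*} (F : Finset T)
    (deg : T → G) (vec : T → A) (hv : ∀ t ∈ F, vec t ∈ 𝒜 (deg t)) (g : G) :
    gcomp 𝒜 h g (∑ t ∈ F, vec t) = ∑ t ∈ F.filter (fun t => deg t = g), vec t := by
  rw [map_sum, Finset.sum_filter]
  exact Finset.sum_congr rfl fun t ht => gcomp_of 𝒜 h (hv t ht)

theorem gsupp_sum_subset (h : DirectSum.IsInternal 𝒜) {T : Type*} (F : Finset T)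
    (deg : T → G) (vec : T → A) (hv : ∀ t ∈ F, vec t ∈ 𝒜 (deg t)) :
    gsupp 𝒜 h (∑ t ∈ F, vec t) ⊆ F.image deg := by
  intro g hg
  rw [mem_gsupp_iff, gcomp_sum 𝒜 h F deg vec hv] at hg
  obtain ⟨t, ht⟩ := Finset.nonempty_of_sum_ne_zero hg
  rw [Finset.mem_filter] at ht
  exact Finset.mem_image.2 ⟨t, ht.1, ht.2⟩

end comps

/-- Homogeneity of the annihilator of a prime submodule. -/
theorem homog {G : Type*} [Monoid G] [DecidableEq G]
    (hUP : ∀ X Y : Finset G, X.Nonempty → Y.Nonempty →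
      ∃ x ∈ X, ∃ y ∈ Y, ∀ x' ∈ X, ∀ y' ∈ Y, x' * y' = x * y → x' = x ∧ y' = y)
    {S : Type*} [Ring S] (𝒮 : G → AddSubgroup S) (hSdir : DirectSum.IsInternal 𝒮)
    {M : Type*} [AddCommGroup M] [Module Sᵐᵒᵖ M] (ℳ : G → AddSubgroup M)
    (hMdir : DirectSum.IsInternal ℳ)
    (hsmul : ∀ {g h : G} {m : M} {s : S}, m ∈ ℳ g → s ∈ 𝒮 h →
      MulOpposite.op s • m ∈ ℳ (g * h))
    (N : Submodule Sᵐᵒᵖ M) (hN : N ≠ ⊥)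
    (hprime : ∀ P : Submodule Sᵐᵒᵖ M, P ≤ N → P ≠ ⊥ →
      {s : S | ∀ n ∈ P, MulOpposite.op s • n = 0} =
        {s : S | ∀ n ∈ N, MulOpposite.op s • n = 0})
    (k : ℕ) (c : Fin k → S) (d : Fin k → G) (hd : Function.Injective d)
    (hc : ∀ i, c i ∈ 𝒮 (d i))
    (hsum : (∑ i, c i) ∈ {s : S | ∀ n ∈ N, MulOpposite.op s • n = 0}) :
    ∀ i, c i ∈ {s : S | ∀ n ∈ N, MulOpposite.op s • n = 0} := by
  -- a minimal-support nonzero element of N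
  obtain ⟨n₀, hn₀N, hn₀⟩ := N.ne_bot_iff.1 hN
  set C : Set ℕ := {q | ∃ m, m ∈ N ∧ m ≠ 0 ∧ (gsupp ℳ hMdir m).card = q} with hC
  have hCne : C.Nonempty := ⟨_, n₀, hn₀N, hn₀, rfl⟩
  obtain ⟨m, hmN, hm0, hmcard⟩ := Nat.sInf_mem hCne
  set j := sInf C with hj
  have hmin : ∀ m', m' ∈ N → m' ≠ 0 → j ≤ (gsupp ℳ hMdir m').card :=
    fun m' h1 h2 => Nat.sInf_le ⟨m', h1, h2, rfl⟩
  have hj1 : 1 ≤ j := by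
    rw [← hmcard]
    rw [Nat.one_le_iff_ne_zero, ne_eq, Finset.card_eq_zero]
    intro he
    exact hm0 ((gsupp_eq_empty_iff ℳ hMdir m).1 he)
  -- the key lemma
  have L : ∀ q : ℕ, ∀ t : Finset (Fin k), t.card ≤ q → ∀ n, n ∈ N →
      (gsupp ℳ hMdir n).card ≤ j → op (∑ i ∈ t, c i) • n = 0 →
      ∀ i ∈ t, op (c i) • n = 0 := by
    intro q
    induction q with
    | zero =>
      intro t ht n _ _ _ i hi
      rw [Finset.card_eq_zero.1 (Nat.le_zero.1 ht)] at hi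
      exact absurd hi (Finset.notMem_empty i)
    | succ q ih =>
      intro t htcard n hnN hncard hnb i hi
      by_cases hn0 : n = 0
      · rw [hn0, smul_zero]
      have hYne : (gsupp ℳ hMdir n).Nonempty :=
        Finset.nonempty_iff_ne_empty.2
          (fun he => hn0 ((gsupp_eq_empty_iff ℳ hMdir n).1 he))
      have hXne : (t.image d).Nonempty := ⟨d i, Finset.mem_image_of_mem d hi⟩
      obtain ⟨y₀, hy₀, x₀, hx₀, huniq⟩ := hUP (gsupp ℳ hMdir n) (t.image d) hYne hXne
      obtain ⟨i₀, hi₀t, hdi₀⟩ := Finset.mem_image.1 hx₀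
      -- decomposition of n·(∑ c i)
      have hdec : op (∑ i' ∈ t, c i') • n =
          ∑ p ∈ (gsupp ℳ hMdir n) ×ˢ t, op (c p.2) • (gcomp ℳ hMdir p.1 n) := by
        rw [Finset.sum_product]
        conv_lhs => rw [← sum_gsupp ℳ hMdir n]
        rw [Finset.smul_sum]
        refine Finset.sum_congr rfl fun y hy => ?_
        rw [Finset.op_sum, Finset.sum_smul]
      have hvmem : ∀ p ∈ (gsupp ℳ hMdir n) ×ˢ t,
          op (c p.2) • (gcomp ℳ hMdir p.1 n) ∈ ℳ (p.1 * d p.2) :=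
        fun p _ => hsmul (gcomp_mem ℳ hMdir p.1 n) (hc p.2)
      -- the (y₀ * x₀)-component kills the distinguished product
      have hfilt : ((gsupp ℳ hMdir n) ×ˢ t).filter (fun p => p.1 * d p.2 = y₀ * x₀) =
          {(y₀, i₀)} := by
        ext p
        rw [Finset.mem_filter, Finset.mem_product, Finset.mem_singleton]
        constructor
        · rintro ⟨⟨hp1, hp2⟩, hpe⟩
          obtain ⟨he1, he2⟩ := huniq p.1 hp1 (d p.2) (Finset.mem_image_of_mem d hp2) hpe
          have : p.2 = i₀ := hd (he2.trans hdi₀.symm)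
          exact Prod.ext he1 this
        · rintro rfl
          exact ⟨⟨hy₀, hi₀t⟩, by rw [hdi₀]⟩
      have hcomp0 : op (c i₀) • (gcomp ℳ hMdir y₀ n) = 0 := by
        have h0 : gcomp ℳ hMdir (y₀ * x₀) (op (∑ i' ∈ t, c i') • n) = 0 := by
          rw [hnb, map_zero]
        rw [hdec, gcomp_sum ℳ hMdir _ (fun p => p.1 * d p.2) _ hvmem, hfilt,
          Finset.sum_singleton] at h0
        exact h0
      -- n · c i₀ = 0
      have hdec2 : op (c i₀) • n = ∑ y ∈ gsupp ℳ hMdir n,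
          op (c i₀) • (gcomp ℳ hMdir y n) := by
        conv_lhs => rw [← sum_gsupp ℳ hMdir n]
        rw [Finset.smul_sum]
      have hvmem2 : ∀ y ∈ gsupp ℳ hMdir n,
          op (c i₀) • (gcomp ℳ hMdir y n) ∈ ℳ (y * d i₀) :=
        fun y _ => hsmul (gcomp_mem ℳ hMdir y n) (hc i₀)
      have hfilt2 : (gsupp ℳ hMdir n).filter (fun y => y * d i₀ = y₀ * x₀) = {y₀} := by
        ext y
        rw [Finset.mem_filter, Finset.mem_singleton]
        constructor
        · rintro ⟨hy1, hy2⟩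
          exact (huniq y hy1 (d i₀) (Finset.mem_image_of_mem d hi₀t) hy2).1
        · rintro rfl
          exact ⟨hy₀, by rw [hdi₀]⟩
      have hc0 : gcomp ℳ hMdir (y₀ * x₀) (op (c i₀) • n) = 0 := by
        rw [hdec2, gcomp_sum ℳ hMdir _ (fun y => y * d i₀) _ hvmem2, hfilt2,
          Finset.sum_singleton]
        exact hcomp0
      have hci₀n : op (c i₀) • n = 0 := by
        by_contra hne
        have h1 := hmin _ (N.smul_mem (op (c i₀)) hnN) hne
        have hsub : gsupp ℳ hMdir (op (c i₀) • n) ⊆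
            ((gsupp ℳ hMdir n).image (fun y => y * d i₀)).erase (y₀ * x₀) := by
          intro g hg
          refine Finset.mem_erase.2 ⟨?_, ?_⟩
          · rintro rfl
            exact (mem_gsupp_iff ℳ hMdir _ _).1 hg hc0
          · have hsb := gsupp_sum_subset ℳ hMdir (gsupp ℳ hMdir n)
              (fun y => y * d i₀) _ hvmem2
            rw [← hdec2] at hsb
            exact hsb hg
        have hmem : y₀ * x₀ ∈ (gsupp ℳ hMdir n).image (fun y => y * d i₀) := by
          rw [← hdi₀]
          exact Finset.mem_image_of_mem _ hy₀
        have h2 : (gsupp ℳ hMdir (op (c i₀) • n)).card ≤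
            (gsupp ℳ hMdir n).card - 1 := by
          calc (gsupp ℳ hMdir (op (c i₀) • n)).card
              ≤ (((gsupp ℳ hMdir n).image (fun y => y * d i₀)).erase (y₀ * x₀)).card :=
                Finset.card_le_card hsub
            _ = ((gsupp ℳ hMdir n).image (fun y => y * d i₀)).card - 1 :=
                Finset.card_erase_of_mem hmem
            _ ≤ (gsupp ℳ hMdir n).card - 1 :=
                Nat.sub_le_sub_right (Finset.card_image_le) 1
        omega
      -- remove i₀ and recurse
      have hrest : op (∑ i' ∈ t.erase i₀, c i') • n = 0 := by
        have hs : ∑ i' ∈ t.erase i₀, c i' = (∑ i' ∈ t, c i') - c i₀ :=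
          eq_sub_of_add_eq (Finset.sum_erase_add t c hi₀t)
        rw [hs, op_sub, sub_smul, hnb, hci₀n, sub_zero]
      rcases eq_or_ne i i₀ with rfl | hne
      · exact hci₀n
      · have hcard' : (t.erase i₀).card ≤ q := by
          have := Finset.card_erase_of_mem hi₀t
          omega
        exact ih (t.erase i₀) hcard' n hnN hncard hrest i (Finset.mem_erase.2 ⟨hne, hi⟩)
  -- m annihilates all c i after any scalar
  have hmS : ∀ (s : S) (i : Fin k), op (c i) • (op s • m) = 0 := by
    intro s i
    have hsdec : op s • m = ∑ h ∈ gsupp 𝒮 hSdir s, op (gcomp 𝒮 hSdir h s) • m := by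
      conv_lhs => rw [← sum_gsupp 𝒮 hSdir s]
      rw [Finset.op_sum, Finset.sum_smul]
    rw [hsdec, Finset.smul_sum]
    refine Finset.sum_eq_zero fun h hh => ?_
    set n := op (gcomp 𝒮 hSdir h s) • m with hn
    have hnN : n ∈ N := N.smul_mem _ hmN
    have hndec : n = ∑ y ∈ gsupp ℳ hMdir m,
        op (gcomp 𝒮 hSdir h s) • (gcomp ℳ hMdir y m) := by
      rw [hn]
      conv_lhs => rw [← sum_gsupp ℳ hMdir m]
      rw [Finset.smul_sum]
    have hncard : (gsupp ℳ hMdir n).card ≤ j := by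
      have hsb := gsupp_sum_subset ℳ hMdir (gsupp ℳ hMdir m) (fun y => y * h)
        (fun y => op (gcomp 𝒮 hSdir h s) • (gcomp ℳ hMdir y m))
        (fun y _ => hsmul (gcomp_mem ℳ hMdir y m) (gcomp_mem 𝒮 hSdir h s))
      rw [← hndec] at hsb
      calc (gsupp ℳ hMdir n).card ≤ ((gsupp ℳ hMdir m).image (fun y => y * h)).card :=
            Finset.card_le_card hsb
        _ ≤ (gsupp ℳ hMdir m).card := Finset.card_image_le
        _ = j := hmcard
    exact L (Finset.univ.card) Finset.univ le_rfl n hnN hncard (hsum n hnN) i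
      (Finset.mem_univ i)
  -- the submodule P
  set P : Submodule Sᵐᵒᵖ M :=
    { carrier := {n | n ∈ N ∧ ∀ (s : S) (i : Fin k), op (c i) • (op s • n) = 0}
      add_mem' := fun {x y} hx hy => ⟨N.add_mem hx.1 hy.1, fun s i => by
        rw [smul_add, smul_add, hx.2 s i, hy.2 s i, add_zero]⟩
      zero_mem' := ⟨N.zero_mem, fun s i => by rw [smul_zero, smul_zero]⟩
      smul_mem' := fun r {x} hx => ⟨N.smul_mem r hx.1, fun s i => by
        have he : op s • (r • x) = op (r.unop * s) • x := by
          rw [smul_smul, MulOpposite.op_mul, MulOpposite.op_unop]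
        rw [he]
        exact hx.2 (r.unop * s) i⟩ } with hP
  have hPle : P ≤ N := fun x hx => hx.1
  have hPne : P ≠ ⊥ := by
    intro hbot
    exact hm0 ((Submodule.eq_bot_iff P).1 hbot m ⟨hmN, fun s i => hmS s i⟩)
  intro i
  rw [← hprime P hPle hPne]
  intro n hn
  have h1 := hn.2 1 i
  rwa [MulOpposite.op_one, one_smul] at h1

end Stmt8Aux


/-- A unique product monoid. -/
def IsUPM (G : Type*) [Monoid G] : Prop :=
  ∀ X Y : Finset G, X.Nonempty → Y.Nonempty →
    ∃ x ∈ X, ∃ y ∈ Y, ∀ x' ∈ X, ∀ y' ∈ Y, x' * y' = x * y → x' = x ∧ y' = y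

/-- Let `G` be a unique product monoid, `S` a `G`-graded ring, `M` a graded right
`S`-module, and `N` a prime `S`-submodule of `M` (nonzero, and every nonzero
submodule contained in `N` has the same annihilator as `N`).  Then `ann(N)` is a
homogeneous prime (two-sided, proper) ideal of `S`. -/
theorem stmt8 {G : Type*} [Monoid G] [DecidableEq G] (hUP : IsUPM G)
    {S : Type*} [Ring S] (𝒮 : G → AddSubgroup S)
    (hSdir : DirectSum.IsInternal 𝒮) (hone : (1 : S) ∈ 𝒮 1)
    (hmul : ∀ {g h : G} {a b : S}, a ∈ 𝒮 g → b ∈ 𝒮 h → a * b ∈ 𝒮 (g * h))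
    {M : Type*} [AddCommGroup M] [Module Sᵐᵒᵖ M] (ℳ : G → AddSubgroup M)
    (hMdir : DirectSum.IsInternal ℳ)
    (hsmul : ∀ {g h : G} {m : M} {s : S}, m ∈ ℳ g → s ∈ 𝒮 h →
      MulOpposite.op s • m ∈ ℳ (g * h))
    (N : Submodule Sᵐᵒᵖ M) (hN : N ≠ ⊥)
    (hprime : ∀ P : Submodule Sᵐᵒᵖ M, P ≤ N → P ≠ ⊥ →
      {s : S | ∀ n ∈ P, MulOpposite.op s • n = 0} =
        {s : S | ∀ n ∈ N, MulOpposite.op s • n = 0}) :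
    (0 : S) ∈ {s : S | ∀ n ∈ N, MulOpposite.op s • n = 0} ∧
    (∀ a ∈ {s : S | ∀ n ∈ N, MulOpposite.op s • n = 0},
      ∀ b ∈ {s : S | ∀ n ∈ N, MulOpposite.op s • n = 0},
      a + b ∈ {s : S | ∀ n ∈ N, MulOpposite.op s • n = 0}) ∧
    (∀ a ∈ {s : S | ∀ n ∈ N, MulOpposite.op s • n = 0},
      -a ∈ {s : S | ∀ n ∈ N, MulOpposite.op s • n = 0}) ∧
    (∀ a ∈ {s : S | ∀ n ∈ N, MulOpposite.op s • n = 0}, ∀ t : S,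
      a * t ∈ {s : S | ∀ n ∈ N, MulOpposite.op s • n = 0} ∧
      t * a ∈ {s : S | ∀ n ∈ N, MulOpposite.op s • n = 0}) ∧
    (∀ (k : ℕ) (c : Fin k → S) (d : Fin k → G), Function.Injective d →
      (∀ i, c i ∈ 𝒮 (d i)) →
      (∑ i, c i) ∈ {s : S | ∀ n ∈ N, MulOpposite.op s • n = 0} →
      ∀ i, c i ∈ {s : S | ∀ n ∈ N, MulOpposite.op s • n = 0}) ∧
    (1 : S) ∉ {s : S | ∀ n ∈ N, MulOpposite.op s • n = 0} ∧
    (∀ a b : S, (∀ s : S, a * s * b ∈ {s : S | ∀ n ∈ N, MulOpposite.op s • n = 0}) →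
      a ∈ {s : S | ∀ n ∈ N, MulOpposite.op s • n = 0} ∨
      b ∈ {s : S | ∀ n ∈ N, MulOpposite.op s • n = 0}) := by
  refine ⟨?_, ?_, ?_, ?_, ?_, ?_, ?_⟩
  · intro n hn
    rw [MulOpposite.op_zero, zero_smul]
  · intro a ha b hb n hn
    rw [MulOpposite.op_add, add_smul, ha n hn, hb n hn, add_zero]
  · intro a ha n hn
    rw [MulOpposite.op_neg, neg_smul, ha n hn, neg_zero]
  · intro a ha t
    constructor
    · intro n hn
      rw [MulOpposite.op_mul, mul_smul, ha n hn, smul_zero]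
    · intro n hn
      rw [MulOpposite.op_mul, mul_smul]
      exact ha _ (N.smul_mem _ hn)
  · intro k c d hd hc hsum
    exact Stmt8Aux.homog hUP 𝒮 hSdir ℳ hMdir (fun {g h m s} => hsmul) N hN hprime
      k c d hd hc hsum
  · intro h1
    obtain ⟨n, hnN, hn0⟩ := N.ne_bot_iff.1 hN
    have := h1 n hnN
    rw [MulOpposite.op_one, one_smul] at this
    exact hn0 this
  · intro a b hab
    by_cases haA : a ∈ {s : S | ∀ n ∈ N, MulOpposite.op s • n = 0}
    · exact Or.inl haA
    right
    rw [Set.mem_setOf_eq] at haA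
    push_neg at haA
    obtain ⟨n₀, hn₀N, hn₀⟩ := haA
    set P : Submodule Sᵐᵒᵖ M :=
      { carrier := {m | m ∈ N ∧ ∀ s : S, MulOpposite.op (s * b) • m = 0}
        add_mem' := fun {x y} hx hy => ⟨N.add_mem hx.1 hy.1, fun s => by
          rw [smul_add, hx.2 s, hy.2 s, add_zero]⟩
        zero_mem' := ⟨N.zero_mem, fun s => by rw [smul_zero]⟩
        smul_mem' := fun r {x} hx => ⟨N.smul_mem r hx.1, fun s => by
          have he : MulOpposite.op (s * b) • (r • x) =
              MulOpposite.op (r.unop * (s * b)) • x := by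
            conv_lhs => rw [← MulOpposite.op_unop r]
            rw [smul_smul, ← MulOpposite.op_mul]
          rw [he, ← mul_assoc]
          exact hx.2 (r.unop * s)⟩ } with hPdef
    have hPle : P ≤ N := fun x hx => hx.1
    have hPne : P ≠ ⊥ := by
      intro hbot
      refine hn₀ ((Submodule.eq_bot_iff P).1 hbot (MulOpposite.op a • n₀)
        ⟨N.smul_mem _ hn₀N, fun s => ?_⟩)
      have he : MulOpposite.op (s * b) • (MulOpposite.op a • n₀) =
          MulOpposite.op (a * s * b) • n₀ := by
        rw [smul_smul, ← MulOpposite.op_mul, mul_assoc]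
      rw [he]
      exact hab s n₀ hn₀N
    rw [← hprime P hPle hPne]
    intro m hm
    have := hm.2 1
    rwa [one_mul] at this
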